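/- Let d ≥ 1, R > 0 and σ₁, σ₂ > 0. For x ∈ ℝ^d and y ∈ {−1, 1} define G(x,y) ∈ ℝ^{d + d(d+1)/2} with blocks y·x and (σ₁/σ₂)·t₂(x), where t₂(x) collects the second-order monomials and the squared Euclidean distance of the t₂ blocks counts Σ_j (x_j² − x'_j²)² once and each (x_j x_k − x'_j x'_k)² with j < k twice. Then for all x, x' ∈ ℝ^d with ‖x‖₂ ≤ R and ‖x'‖₂ ≤ R and all y, y' ∈ {−1, 1}, one has ‖G(x,y) − G(x',y')‖₂² ≤ σ₂² / (2σ₁²) + 2R² + 2σ₁² R⁴ / σ₂². -/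

import Mathlib

open scoped RealInnerProductSpace

theorem sym_split_aux (d : ℕ) (F : Fin d → Fin d → ℝ) (hsymm : ∀ j k, F j k = F k j) :
    ∑ j, ∑ k, F j k = (∑ j, F j j) + 2 * ∑ j, ∑ k ∈ Finset.Ioi j, F j k := by
  have h := Finset.sum_sum_Ioi_add_eq_sum_sum_off_diag F
  have key : ∀ j : Fin d, ∑ k, F j k = F j j + ∑ k ∈ ({j}ᶜ : Finset (Fin d)), F k j := by
    intro j
    rw [show ({j}ᶜ : Finset (Fin d)) = Finset.univ.erase j from by ext k; simp]
    rw [Finset.sum_congr rfl (fun k _ => hsymm k j), Finset.add_sum_erase _ _ (Finset.mem_univ j)]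
  calc ∑ j, ∑ k, F j k = ∑ j, (F j j + ∑ k ∈ ({j}ᶜ : Finset (Fin d)), F k j) := by
        exact Finset.sum_congr rfl fun j _ => key j
    _ = (∑ j, F j j) + ∑ j, ∑ k ∈ ({j}ᶜ : Finset (Fin d)), F k j := Finset.sum_add_distrib
    _ = (∑ j, F j j) + 2 * ∑ j, ∑ k ∈ Finset.Ioi j, F j k := by
        congr 1
        have h2 : ∑ j : Fin d, ∑ k ∈ ({j}ᶜ : Finset (Fin d)), F k j
            = ∑ i : Fin d, ∑ j ∈ Finset.Ioi i, (F j i + F i j) := by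
          convert h.symm using 2 with i
        rw [h2, Finset.mul_sum]
        refine Finset.sum_congr rfl fun j _ => ?_
        rw [Finset.mul_sum]
        exact Finset.sum_congr rfl fun k _ => by rw [hsymm k j]; ring

theorem algebra_aux (R σ₁ σ₂ A B U ε : ℝ) (hσ₁ : 0 < σ₁) (hσ₂ : 0 < σ₂)
    (hε : ε ^ 2 = 1) (hA0 : 0 ≤ A) (hB0 : 0 ≤ B) (hA : A ≤ R ^ 2) (hB : B ≤ R ^ 2) :
    (A + B - 2 * ε * U) + (σ₁ / σ₂) ^ 2 * (A ^ 2 + B ^ 2 - 2 * U ^ 2)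
      ≤ σ₂ ^ 2 / (2 * σ₁ ^ 2) + 2 * R ^ 2 + 2 * σ₁ ^ 2 * R ^ 4 / σ₂ ^ 2 := by
  rw [← sub_nonneg]
  have hexp : (σ₂ ^ 2 / (2 * σ₁ ^ 2) + 2 * R ^ 2 + 2 * σ₁ ^ 2 * R ^ 4 / σ₂ ^ 2)
      - ((A + B - 2 * ε * U) + (σ₁ / σ₂) ^ 2 * (A ^ 2 + B ^ 2 - 2 * U ^ 2))
      = (σ₂ ^ 4 + 4 * σ₁ ^ 2 * σ₂ ^ 2 * R ^ 2 + 4 * σ₁ ^ 4 * R ^ 4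
          - 2 * σ₁ ^ 2 * σ₂ ^ 2 * (A + B - 2 * ε * U)
          - 2 * σ₁ ^ 4 * (A ^ 2 + B ^ 2 - 2 * U ^ 2)) / (2 * σ₁ ^ 2 * σ₂ ^ 2) := by
    field_simp
    ring
  rw [hexp]
  apply div_nonneg _ (by positivity)
  have hA2 : A ^ 2 ≤ R ^ 4 := by nlinarith
  have hB2 : B ^ 2 ≤ R ^ 4 := by nlinarith
  have h14 : (0:ℝ) ≤ σ₁ ^ 4 := by positivity
  have h1222 : (0:ℝ) ≤ σ₁ ^ 2 * σ₂ ^ 2 := by positivity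
  have hkey : (0:ℝ) ≤ σ₂ ^ 4 + 4 * ε * σ₁ ^ 2 * σ₂ ^ 2 * U + 4 * σ₁ ^ 4 * U ^ 2 := by
    have h : σ₂ ^ 4 + 4 * ε * σ₁ ^ 2 * σ₂ ^ 2 * U + 4 * σ₁ ^ 4 * U ^ 2
        = (σ₂ ^ 2 + 2 * ε * σ₁ ^ 2 * U) ^ 2 := by
      linear_combination (-4 * σ₁ ^ 4 * U ^ 2) * hε
    rw [h]; exact sq_nonneg _
  nlinarith [hkey, mul_nonneg h1222 (sub_nonneg.2 hA), mul_nonneg h1222 (sub_nonneg.2 hB),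
    mul_nonneg h14 (sub_nonneg.2 hA2), mul_nonneg h14 (sub_nonneg.2 hB2)]

/-- Sensitivity bound for the approximate sufficient statistics of logistic
regression: G(x,y) has blocks y·x and (σ₁/σ₂)·t₂(x), and the squared
Euclidean distance is bounded by σ₂²/(2σ₁²) + 2R² + 2σ₁²R⁴/σ₂². -/
theorem logistic_regression_sensitivity
    (d : ℕ) (hd : 1 ≤ d) (R σ₁ σ₂ : ℝ) (hR : 0 < R) (hσ₁ : 0 < σ₁) (hσ₂ : 0 < σ₂)
    (x x' : EuclideanSpace ℝ (Fin d)) (y y' : ℝ)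
    (hy : y = -1 ∨ y = 1) (hy' : y' = -1 ∨ y' = 1)
    (hx : ‖x‖ ≤ R) (hx' : ‖x'‖ ≤ R) :
    ((∑ j, (y * x j - y' * x' j) ^ 2)
      + (σ₁ / σ₂) ^ 2 * (∑ j, (x j ^ 2 - x' j ^ 2) ^ 2
          + 2 * ∑ j, ∑ k ∈ Finset.Ioi j, (x j * x k - x' j * x' k) ^ 2))
      ≤ σ₂ ^ 2 / (2 * σ₁ ^ 2) + 2 * R ^ 2 + 2 * σ₁ ^ 2 * R ^ 4 / σ₂ ^ 2 := by
  set A := ∑ j, x j ^ 2 with hAdef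
  set B := ∑ j, x' j ^ 2 with hBdef
  set U := ∑ j, x j * x' j with hUdef
  have hy2 : y ^ 2 = 1 := by rcases hy with h | h <;> simp [h]
  have hy'2 : y' ^ 2 = 1 := by rcases hy' with h | h <;> simp [h]
  -- first block
  have h1 : ∑ j, (y * x j - y' * x' j) ^ 2 = A + B - 2 * (y * y') * U := by
    have : ∀ j, (y * x j - y' * x' j) ^ 2
        = x j ^ 2 + x' j ^ 2 - 2 * (y * y') * (x j * x' j) := by
      intro j
      linear_combination (x j) ^ 2 * hy2 + (x' j) ^ 2 * hy'2
    rw [Finset.sum_congr rfl fun j _ => this j]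
    rw [Finset.sum_sub_distrib, Finset.sum_add_distrib, ← Finset.mul_sum]
  -- second block
  have hfull : ∑ j, ∑ k, (x j * x k - x' j * x' k) ^ 2 = A ^ 2 + B ^ 2 - 2 * U ^ 2 := by
    have hAA : A ^ 2 = ∑ j, ∑ k, x j ^ 2 * x k ^ 2 := by
      rw [sq, Finset.sum_mul_sum]
    have hBB : B ^ 2 = ∑ j, ∑ k, x' j ^ 2 * x' k ^ 2 := by
      rw [sq, Finset.sum_mul_sum]
    have hUU : U ^ 2 = ∑ j, ∑ k, (x j * x' j) * (x k * x' k) := by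
      rw [sq, Finset.sum_mul_sum]
    rw [hAA, hBB, hUU, Finset.mul_sum, ← Finset.sum_add_distrib, ← Finset.sum_sub_distrib]
    refine Finset.sum_congr rfl fun j _ => ?_
    rw [Finset.mul_sum, ← Finset.sum_add_distrib, ← Finset.sum_sub_distrib]
    exact Finset.sum_congr rfl fun k _ => by ring
  have hsplit := sym_split_aux d (fun j k => (x j * x k - x' j * x' k) ^ 2)
    (fun j k => by ring)
  have h2 : (∑ j, (x j ^ 2 - x' j ^ 2) ^ 2)
      + 2 * ∑ j, ∑ k ∈ Finset.Ioi j, (x j * x k - x' j * x' k) ^ 2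
      = A ^ 2 + B ^ 2 - 2 * U ^ 2 := by
    rw [← hfull, hsplit]
    congr 1
    exact Finset.sum_congr rfl fun j _ => by ring
  rw [h1, h2]
  -- norm facts
  have hnx : A = ‖x‖ ^ 2 := by
    rw [EuclideanSpace.norm_eq, Real.sq_sqrt (by positivity)]
    exact Finset.sum_congr rfl fun j _ => by rw [Real.norm_eq_abs, sq_abs]
  have hnx' : B = ‖x'‖ ^ 2 := by
    rw [EuclideanSpace.norm_eq, Real.sq_sqrt (by positivity)]
    exact Finset.sum_congr rfl fun j _ => by rw [Real.norm_eq_abs, sq_abs]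
  have hA0 : 0 ≤ A := by rw [hnx]; positivity
  have hB0 : 0 ≤ B := by rw [hnx']; positivity
  have hA : A ≤ R ^ 2 := by
    rw [hnx]; exact pow_le_pow_left₀ (norm_nonneg x) hx 2
  have hB : B ≤ R ^ 2 := by
    rw [hnx']; exact pow_le_pow_left₀ (norm_nonneg x') hx' 2
  have hε : (y * y') ^ 2 = 1 := by rw [mul_pow, hy2, hy'2]; ring
  exact algebra_aux R σ₁ σ₂ A B U (y * y') hσ₁ hσ₂ hε hA0 hB0 hA hB
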